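/- If 0 ≤ I < 1, then for all nonnegative integers Z and L, the success probability of a time-restricted double-spending attack is no greater than that of a time-unrestricted double-spending attack: P_TR(I,Z,L) ≤ P_TU(I,Z); moreover, if 0 < I < 1 the inequality is strict: P_TR(I,Z,L) < P_TU(I,Z). -/

import Mathlib

/-- `pathCount i m` is the number of sequences `(s 1, …, s (m+2i+1))` with every entry `±1`,
exactly `i` entries equal to `+1` (hence `m+i+1` entries equal to `-1`), such that
`m + s 1 + ⋯ + s T ≥ 0` for every `T ≤ m + 2i` (the walk started at `m` first reaches `-1`
exactly at the final step). -/
noncomputable def pathCount (i m : ℕ) : ℕ :=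
  Nat.card {s : Fin (m + 2 * i + 1) → ℤ //
    (∀ t, s t = 1 ∨ s t = -1) ∧
    (Finset.univ.filter fun t => s t = 1).card = i ∧
    ∀ T : ℕ, T ≤ m + 2 * i →
      0 ≤ (m : ℤ) + ∑ t ∈ Finset.univ.filter (fun t : Fin (m + 2 * i + 1) => (t : ℕ) < T), s t}

/-- Success probability of a time-restricted double-spending attack with `Z` confirmation
blocks and time restriction of `L` honest blocks after confirmation. -/
noncomputable def P_TR (I : ℝ) (Z L : ℕ) : ℝ :=
  1 - ∑ k ∈ Finset.range (Z + 2),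
    (Nat.choose (k + Z) k : ℝ) * I ^ k * (1 - I) ^ (Z + 1) *
      (1 - ∑ i ∈ Finset.range L,
        (pathCount i (Z + 1 - k) : ℝ) * (1 - I) ^ i * I ^ (Z + 2 - k + i))

/-- The gambler's-ruin catch-up probability `P_I(m)` for a time-unrestricted attack. -/
noncomputable def gamblerP (I : ℝ) (m : ℕ) : ℝ :=
  if I < 1 / 2 then (I / (1 - I)) ^ (m + 1) else 1

/-- Success probability of a time-unrestricted double-spending attack with `Z` confirmation
blocks. -/
noncomputable def P_TU (I : ℝ) (Z : ℕ) : ℝ :=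
  1 - ∑ k ∈ Finset.range (Z + 2),
    (Nat.choose (k + Z) k : ℝ) * I ^ k * (1 - I) ^ (Z + 1) * (1 - gamblerP I (Z + 1 - k))

def PCond (n i m : ℕ) (s : Fin n → ℤ) : Prop :=
  (∀ t, s t = 1 ∨ s t = -1) ∧
  (Finset.univ.filter fun t => s t = 1).card = i ∧
  ∀ T : ℕ, T ≤ m + 2 * i →
    0 ≤ (m : ℤ) + ∑ t ∈ Finset.univ.filter (fun t : Fin n => (t : ℕ) < T), s t

lemma pathCount_eq (i m n : ℕ) (h : n = m + 2 * i + 1) :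
    pathCount i m = Nat.card {s : Fin n → ℤ // PCond n i m s} := by
  subst h; rfl

instance pcondFinite (n i m : ℕ) : Finite {s : Fin n → ℤ // PCond n i m s} := by
  apply Finite.of_injective (fun s => (fun t => decide (s.1 t = 1) : Fin n → Bool))
  rintro ⟨s, hs⟩ ⟨s', hs'⟩ h
  ext t
  have := congrFun h t
  simp only [decide_eq_decide] at this
  rcases hs.1 t with h1 | h1 <;> rcases hs'.1 t with h2 | h2 <;> simp [h1, h2] at this ⊢

lemma count_cons (n : ℕ) (c : ℤ) (s : Fin n → ℤ) :
    (Finset.univ.filter fun t : Fin (n+1) => (Fin.cons c s : Fin (n+1) → ℤ) t = 1).card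
      = (if c = 1 then 1 else 0) + (Finset.univ.filter fun t => s t = 1).card := by
  simp only [Finset.card_filter, Fin.sum_univ_succ, Fin.cons_zero, Fin.cons_succ]

lemma psum_cons (n : ℕ) (c : ℤ) (s : Fin n → ℤ) (T : ℕ) :
    ∑ t ∈ Finset.univ.filter (fun t : Fin (n+1) => (t : ℕ) < T + 1), (Fin.cons c s : Fin (n+1) → ℤ) t
      = c + ∑ t ∈ Finset.univ.filter (fun t : Fin n => (t : ℕ) < T), s t := by
  simp only [Finset.sum_filter, Fin.sum_univ_succ, Fin.cons_zero, Fin.cons_succ, Fin.val_zero,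
    Fin.val_succ]
  simp [Nat.succ_lt_succ_iff]

lemma psum_zero (n : ℕ) (s : Fin n → ℤ) :
    ∑ t ∈ Finset.univ.filter (fun t : Fin n => (t : ℕ) < 0), s t = 0 := by
  simp

lemma psum_one (n : ℕ) (s : Fin (n+1) → ℤ) :
    ∑ t ∈ Finset.univ.filter (fun t : Fin (n+1) => (t : ℕ) < 1), s t = s 0 := by
  simp [Finset.sum_filter, Fin.sum_univ_succ]

lemma cons_head_tail {n : ℕ} (s : Fin (n+1) → ℤ) (c : ℤ) (h0 : s 0 = c) :
    Fin.cons c (Fin.tail s) = s := by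
  rw [← h0]; exact Fin.cons_self_tail s

lemma pcond_cons {n i m : ℕ} (c : ℤ) {i' m' : ℕ} (hc : c = 1 ∨ c = -1)
    (hi : (i' : ℤ) = i + (if c = 1 then 1 else 0)) (hm : (m' : ℤ) = m - c)
    {s : Fin n → ℤ} (h : PCond n i m s) :
    PCond (n+1) i' m' (Fin.cons c s) := by
  obtain ⟨h1, h2, h3⟩ := h
  refine ⟨?_, ?_, ?_⟩
  · intro t
    refine Fin.cases ?_ ?_ t
    · simpa using hc
    · intro j; simpa using h1 j
  · rw [count_cons, h2]
    rcases hc with h | h <;> subst h <;> simp at hi ⊢ <;> omega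
  · intro T hT
    rcases hc with h | h <;> subst h
    · -- c = 1 : m' = m - 1, i' = i + 1
      simp at hi hm
      cases T with
      | zero => rw [psum_zero]; positivity
      | succ T =>
        rw [psum_cons]
        have hT' : T ≤ m + 2 * i := by omega
        have := h3 T hT'
        push_cast [hm] at *
        linarith
    · -- c = -1 : m' = m + 1, i' = i
      have hi' : i' = i := by simp at hi; omega
      have hm' : (m' : ℤ) = m + 1 := by rw [hm]; ring
      cases T with
      | zero => rw [psum_zero]; positivity
      | succ T =>
        rw [psum_cons]
        have hT' : T ≤ m + 2 * i := by omega
        have := h3 T hT'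
        rw [hm']
        linarith

lemma pcond_tail {n i m : ℕ} (c : ℤ) {i' m' : ℕ} (hc : c = 1 ∨ c = -1)
    (hi : (i' : ℤ) = i + (if c = 1 then 1 else 0)) (hm : (m' : ℤ) = m - c)
    {s : Fin (n+1) → ℤ} (h : PCond (n+1) i' m' s) (h0 : s 0 = c) :
    PCond n i m (Fin.tail s) := by
  obtain ⟨h1, h2, h3⟩ := h
  have hs : s = Fin.cons c (Fin.tail s) := by
    rw [← h0]; exact (Fin.cons_self_tail s).symm
  refine ⟨?_, ?_, ?_⟩
  · intro t; exact h1 t.succ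
  · rw [hs, count_cons] at h2
    rcases hc with h | h <;> subst h <;> simp at hi h2 ⊢ <;> omega
  · intro T hT
    have hT1 : T + 1 ≤ m' + 2 * i' := by
      rcases hc with h | h <;> subst h <;> simp at hi hm <;> omega
    have := h3 (T + 1) hT1
    rw [hs, psum_cons] at this
    have : (0:ℤ) ≤ m' + c + ∑ t ∈ Finset.univ.filter (fun t : Fin n => (t : ℕ) < T), Fin.tail s t := by
      linarith
    have hmc : (m : ℤ) = m' + c := by rw [hm]; ring
    rw [hmc]
    exact this

lemma pathCount_succ_succ (i m : ℕ) :
    pathCount (i+1) (m+1) = pathCount (i+1) m + pathCount i (m+2) := by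
  set n := m + 2 * i + 3 with hn
  rw [pathCount_eq (i+1) (m+1) (n+1) (by omega), pathCount_eq (i+1) m n (by omega),
    pathCount_eq i (m+2) n (by omega), ← Nat.card_sum]
  refine (Nat.card_congr (Equiv.ofBijective ?_ ⟨?_, ?_⟩)).symm
  · rintro (⟨s, hs⟩ | ⟨s, hs⟩)
    · exact ⟨Fin.cons (-1) s, pcond_cons (-1) (Or.inr rfl) (by norm_num) (by push_cast; ring) hs⟩
    · exact ⟨Fin.cons 1 s, pcond_cons 1 (Or.inl rfl) (by norm_num) (by push_cast; ring) hs⟩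
  · rintro (⟨s, hs⟩ | ⟨s, hs⟩) (⟨s', hs'⟩ | ⟨s', hs'⟩) h <;>
      simp only [Subtype.mk.injEq] at h
    · exact congrArg Sum.inl (Subtype.ext (funext fun t => by
        have := congrFun h t.succ; simpa using this))
    · exact absurd (congrFun h 0) (by simp)
    · exact absurd (congrFun h 0) (by simp)
    · exact congrArg Sum.inr (Subtype.ext (funext fun t => by
        have := congrFun h t.succ; simpa using this))
  · rintro ⟨s, hs⟩
    rcases hs.1 0 with h0 | h0
    · refine ⟨Sum.inr ⟨Fin.tail s, pcond_tail 1 (Or.inl rfl) (by norm_num) (by push_cast; ring) hs h0⟩, ?_⟩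
      exact Subtype.ext (cons_head_tail s 1 h0)
    · refine ⟨Sum.inl ⟨Fin.tail s, pcond_tail (-1) (Or.inr rfl) (by norm_num) (by push_cast; ring) hs h0⟩, ?_⟩
      exact Subtype.ext (cons_head_tail s (-1) h0)

lemma pathCount_succ_zero (i : ℕ) : pathCount (i+1) 0 = pathCount i 1 := by
  set n := 2 * i + 2 with hn
  rw [pathCount_eq (i+1) 0 (n+1) (by omega), pathCount_eq i 1 n (by omega)]
  refine (Nat.card_congr (Equiv.ofBijective ?_ ⟨?_, ?_⟩)).symm
  · rintro ⟨s, hs⟩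
    exact ⟨Fin.cons 1 s, pcond_cons 1 (Or.inl rfl) (by norm_num) (by norm_num) hs⟩
  · rintro ⟨s, hs⟩ ⟨s', hs'⟩ h
    simp only [Subtype.mk.injEq] at h
    exact Subtype.ext (funext fun t => by have := congrFun h t.succ; simpa using this)
  · rintro ⟨s, hs⟩
    have h0 : s 0 = 1 := by
      rcases hs.1 0 with h0 | h0
      · exact h0
      · exfalso
        have h1 := hs.2.2 1 (by omega)
        rw [psum_one, h0] at h1
        norm_num at h1
    refine ⟨⟨Fin.tail s, pcond_tail 1 (Or.inl rfl) (by norm_num) (by norm_num) hs h0⟩, ?_⟩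
    exact Subtype.ext (cons_head_tail s 1 h0)

lemma filter_lt_card_le (n T : ℕ) :
    (Finset.univ.filter fun t : Fin n => (t : ℕ) < T).card ≤ T := by
  have := Finset.card_le_card_of_injOn (f := fun t : Fin n => (t : ℕ))
    (s := Finset.univ.filter fun t : Fin n => (t : ℕ) < T) (t := Finset.range T)
    (by intro t ht; simp at ht ⊢; exact ht) (Fin.val_injective.injOn)
  simpa using this

lemma pathCount_zero (m : ℕ) : pathCount 0 m = 1 := by
  rw [pathCount_eq 0 m (m+1) (by omega), Nat.card_eq_one_iff_unique]
  constructor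
  · constructor
    rintro ⟨s, hs⟩ ⟨s', hs'⟩
    have key : ∀ (u : Fin (m+1) → ℤ), PCond (m+1) 0 m u → ∀ t, u t = -1 := by
      rintro u ⟨h1, h2, _⟩ t
      rcases h1 t with h | h
      · exfalso
        have : t ∈ Finset.univ.filter fun t => u t = 1 := by simp [h]
        rw [Finset.card_eq_zero] at h2
        simp [h2] at this
      · exact h
    exact Subtype.ext (funext fun t => by show s t = s' t; rw [key s hs t, key s' hs' t])
  · refine ⟨⟨fun _ => -1, ?_, ?_, ?_⟩⟩
    · intro t; exact Or.inr rfl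
    · rw [Finset.card_eq_zero, Finset.filter_eq_empty_iff]
      intro t _
      norm_num
    · intro T hT
      rw [Finset.sum_const, nsmul_eq_mul]
      have h1 := filter_lt_card_le (m+1) T
      have hTm : T ≤ m := by omega
      have h2 : ((Finset.univ.filter fun t : Fin (m+1) => (t : ℕ) < T).card : ℤ) ≤ (m : ℤ) := by
        exact_mod_cast le_trans h1 hTm
      linarith

noncomputable def fsum (J : ℝ) (L m : ℕ) : ℝ :=
  ∑ i ∈ Finset.range L, (pathCount i m : ℝ) * (1 - J) ^ i * J ^ (m + 1 + i)

lemma fsum_nonneg {J : ℝ} (h0 : 0 ≤ J) (h1 : J ≤ 1) (L m : ℕ) : 0 ≤ fsum J L m := by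
  apply Finset.sum_nonneg
  intro i _
  have : (0:ℝ) ≤ 1 - J := by linarith
  positivity

lemma fsum_rec0 (J : ℝ) (L : ℕ) : fsum J (L+1) 0 = J + (1 - J) * fsum J L 1 := by
  have e1 : fsum J (L+1) 0
      = ∑ i ∈ Finset.range L, (pathCount i 1 : ℝ) * (1-J)^(i+1) * J^(2+i) + J := by
    unfold fsum
    rw [Finset.sum_range_succ']
    congr 1
    · apply Finset.sum_congr rfl
      intro i _
      rw [pathCount_succ_zero]
      ring
    · rw [pathCount_zero]; push_cast; ring
  have e2 : (1 - J) * fsum J L 1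
      = ∑ i ∈ Finset.range L, (pathCount i 1 : ℝ) * (1-J)^(i+1) * J^(2+i) := by
    unfold fsum
    rw [Finset.mul_sum]
    apply Finset.sum_congr rfl
    intro i _
    ring
  rw [e1, e2]
  ring

lemma fsum_rec (J : ℝ) (L m : ℕ) :
    fsum J (L+1) (m+1) = J * fsum J (L+1) m + (1 - J) * fsum J L (m+2) := by
  have e1 : fsum J (L+1) (m+1)
      = ∑ i ∈ Finset.range L, ((pathCount (i+1) m : ℝ) * (1-J)^(i+1) * J^(m+3+i)
          + (pathCount i (m+2) : ℝ) * (1-J)^(i+1) * J^(m+3+i)) + J^(m+2) := by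
    unfold fsum
    rw [Finset.sum_range_succ']
    congr 1
    · apply Finset.sum_congr rfl
      intro i _
      have : ((pathCount (i+1) (m+1) : ℝ)) = (pathCount (i+1) m : ℝ) + (pathCount i (m+2) : ℝ) := by
        exact_mod_cast congrArg (Nat.cast : ℕ → ℝ) (pathCount_succ_succ i m)
      rw [this]
      ring
    · rw [pathCount_zero]; push_cast; ring
  have e2 : J * fsum J (L+1) m
      = ∑ i ∈ Finset.range L, (pathCount (i+1) m : ℝ) * (1-J)^(i+1) * J^(m+3+i) + J^(m+2) := by
    unfold fsum
    rw [Finset.sum_range_succ', mul_add, Finset.mul_sum]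
    congr 1
    · apply Finset.sum_congr rfl
      intro i _
      ring
    · rw [pathCount_zero]; push_cast; ring
  have e3 : (1 - J) * fsum J L (m+2)
      = ∑ i ∈ Finset.range L, (pathCount i (m+2) : ℝ) * (1-J)^(i+1) * J^(m+3+i) := by
    unfold fsum
    rw [Finset.mul_sum]
    apply Finset.sum_congr rfl
    intro i _
    ring
  rw [e1, e2, e3, Finset.sum_add_distrib]
  ring

lemma fsum_lt_one {J : ℝ} (h0 : 0 ≤ J) (h1 : J < 1) (L : ℕ) : ∀ m, fsum J L m < 1 := by
  induction L with
  | zero => intro m; simp [fsum]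
  | succ L ih =>
    intro m
    induction m with
    | zero =>
      rw [fsum_rec0]
      have := ih 1
      nlinarith
    | succ m ihm =>
      rw [fsum_rec]
      have hL := ih (m+2)
      nlinarith

lemma fsum_swap {I : ℝ} (hI1 : I < 1) (L m : ℕ) :
    fsum I L m = (I / (1 - I)) ^ (m + 1) * fsum (1 - I) L m := by
  unfold fsum
  rw [Finset.mul_sum]
  apply Finset.sum_congr rfl
  intro i _
  have h : (1 : ℝ) - I ≠ 0 := by linarith
  rw [show (1 : ℝ) - (1 - I) = I by ring]
  rw [div_pow]
  field_simp
  ring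

lemma fsum_le_gamblerP {I : ℝ} (hI0 : 0 ≤ I) (hI1 : I < 1) (L m : ℕ) :
    fsum I L m ≤ gamblerP I m ∧ (0 < I → fsum I L m < gamblerP I m) := by
  by_cases h : I < 1 / 2
  · rw [gamblerP, if_pos h]
    rcases eq_or_lt_of_le hI0 with h0 | h0
    · have hz : fsum I L m = 0 := by
        unfold fsum
        apply Finset.sum_eq_zero
        intro i _
        rw [← h0]
        rw [zero_pow (by omega : m + 1 + i ≠ 0)]
        ring
      rw [hz, ← h0]
      constructor
      · rw [zero_div, zero_pow (by omega : m + 1 ≠ 0)]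
      · intro hc; linarith
    · have hswap := fsum_swap hI1 L m
      have hlt : fsum (1 - I) L m < 1 := fsum_lt_one (by linarith) (by linarith) L m
      have hge : 0 ≤ fsum (1 - I) L m := fsum_nonneg (by linarith) (by linarith) L m
      have hr : 0 < (I / (1 - I)) ^ (m + 1) := by
        apply pow_pos
        apply div_pos h0
        linarith
      constructor
      · rw [hswap]; nlinarith
      · intro _; rw [hswap]; nlinarith
  · rw [gamblerP, if_neg h]
    have := fsum_lt_one hI0 hI1 L m
    exact ⟨le_of_lt this, fun _ => this⟩


/-- If `0 ≤ I < 1`, the success probability of a time-restricted double-spending attack is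
no greater than that of a time-unrestricted one; if moreover `0 < I`, the inequality is
strict. -/
theorem P_TR_le_P_TU (I : ℝ) (hI0 : 0 ≤ I) (hI1 : I < 1) (Z L : ℕ) :
    P_TR I Z L ≤ P_TU I Z ∧ (0 < I → P_TR I Z L < P_TU I Z) := by
  have hrw : P_TU I Z - P_TR I Z L = ∑ k ∈ Finset.range (Z + 2),
      (Nat.choose (k + Z) k : ℝ) * I ^ k * (1 - I) ^ (Z + 1) *
        (gamblerP I (Z + 1 - k) - fsum I L (Z + 1 - k)) := by
    unfold P_TU P_TR
    rw [sub_sub_sub_cancel_left, ← Finset.sum_sub_distrib]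
    apply Finset.sum_congr rfl
    intro k hk
    have hk' : k ≤ Z + 1 := by simp at hk; omega
    have hexp : ∀ i, Z + 2 - k + i = (Z + 1 - k) + 1 + i := by intro i; omega
    have : (∑ i ∈ Finset.range L,
        (pathCount i (Z + 1 - k) : ℝ) * (1 - I) ^ i * I ^ (Z + 2 - k + i))
        = fsum I L (Z + 1 - k) := by
      unfold fsum
      apply Finset.sum_congr rfl
      intro i _
      rw [hexp i]
    rw [this]
    ring
  have hterm : ∀ k ∈ Finset.range (Z + 2),
      0 ≤ (Nat.choose (k + Z) k : ℝ) * I ^ k * (1 - I) ^ (Z + 1) *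
        (gamblerP I (Z + 1 - k) - fsum I L (Z + 1 - k)) := by
    intro k _
    have h1 : (0:ℝ) ≤ (Nat.choose (k + Z) k : ℝ) * I ^ k * (1 - I) ^ (Z + 1) := by
      have : (0:ℝ) ≤ 1 - I := by linarith
      positivity
    have h2 := (fsum_le_gamblerP hI0 hI1 L (Z + 1 - k)).1
    nlinarith
  constructor
  · have : 0 ≤ P_TU I Z - P_TR I Z L := by
      rw [hrw]; exact Finset.sum_nonneg hterm
    linarith
  · intro hIpos
    have hpos : 0 < P_TU I Z - P_TR I Z L := by
      rw [hrw]
      apply Finset.sum_pos' hterm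
      refine ⟨0, by simp, ?_⟩
      have h1 : (0:ℝ) < (Nat.choose (0 + Z) 0 : ℝ) * I ^ 0 * (1 - I) ^ (Z + 1) := by
        have hpos' : (0:ℝ) < 1 - I := by linarith
        simp
        positivity
      have h2 := (fsum_le_gamblerP hI0 hI1 L (Z + 1 - 0)).2 hIpos
      nlinarith
    linarith
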